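/- The LDP-FL quantizer with parameters c ∈ ℝ, r > 0, ε > 0 satisfies ε-parameter-based local differential privacy: for all w, w′ ∈ [c−r, c+r] and each output value v ∈ {c − r·α(ε), c + r·α(ε)}, P(Q(w) = v) ≤ e^ε · P(Q(w′) = v). -/

import Mathlib

open Real Set

/-- `α(ε) = (e^ε + 1)/(e^ε − 1)`. -/
noncomputable def alphaFn (ε : ℝ) : ℝ := (Real.exp ε + 1) / (Real.exp ε - 1)

/-- `P(Q(w) = v)` for the LDP-FL quantizer with parameters `c, r, ε` at input `w`:
the value `c + r·α(ε)` occurs with probability `1/2 + (w−c)/(2rα(ε))` and the value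
`c − r·α(ε)` with probability `1/2 − (w−c)/(2rα(ε))`. -/
noncomputable def probQ (c r ε w v : ℝ) : ℝ :=
  if v = c + r * alphaFn ε then 1 / 2 + (w - c) / (2 * r * alphaFn ε)
  else if v = c - r * alphaFn ε then 1 / 2 - (w - c) / (2 * r * alphaFn ε)
  else 0

lemma alpha_gt_one {ε : ℝ} (hε : 0 < ε) : 1 < alphaFn ε := by
  have hE : 1 < Real.exp ε := by
    have := Real.exp_lt_exp.mpr hε; simpa using this
  rw [alphaFn]
  rw [lt_div_iff₀ (by linarith)]
  linarith

lemma key {r α E x x' : ℝ} (hr : 0 < r) (hα : 1 < α) (hE : E * (α - 1) = α + 1)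
    (hx : x ≤ r) (hx' : -r ≤ x') (hEpos : 1 < E) :
    1 / 2 + x / (2 * r * α) ≤ E * (1 / 2 + x' / (2 * r * α)) := by
  have hd : 0 < 2 * r * α := by positivity
  rw [show 1 / 2 + x / (2 * r * α) = (r * α + x) / (2 * r * α) by field_simp,
    show E * (1 / 2 + x' / (2 * r * α)) = E * (r * α + x') / (2 * r * α) by field_simp,
    div_le_div_iff_of_pos_right hd]
  nlinarith [mul_le_mul_of_nonneg_left hx' (le_of_lt (lt_trans one_pos hEpos))]

/-- the LDP-FL quantizer satisfies `ε`-parameter-based local differential privacy: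
for all inputs `w, w' ∈ [c−r, c+r]` and each output value `v ∈ {c − r·α(ε), c + r·α(ε)}`,
`P(Q(w) = v) ≤ e^ε · P(Q(w') = v)`. -/
theorem stmt3 (c r ε : ℝ) (hr : 0 < r) (hε : 0 < ε) :
    ∀ w ∈ Icc (c - r) (c + r), ∀ w' ∈ Icc (c - r) (c + r),
      ∀ v ∈ ({c - r * alphaFn ε, c + r * alphaFn ε} : Set ℝ),
        probQ c r ε w v ≤ Real.exp ε * probQ c r ε w' v := by
  intro w hw w' hw' v hv
  have hE : 1 < Real.exp ε := by
    have := Real.exp_lt_exp.mpr hε; simpa using this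
  have hα : 1 < alphaFn ε := alpha_gt_one hε
  have hEα : Real.exp ε * (alphaFn ε - 1) = alphaFn ε + 1 := by
    have h1 : Real.exp ε - 1 ≠ 0 := by linarith
    rw [alphaFn]
    field_simp
    ring
  have hne : c - r * alphaFn ε ≠ c + r * alphaFn ε := by
    have : 0 < r * alphaFn ε := by positivity
    intro h; nlinarith
  obtain ⟨hw1, hw2⟩ := hw
  obtain ⟨hw1', hw2'⟩ := hw'
  rcases hv with hv | hv
  · subst hv
    rw [probQ, probQ, if_neg hne, if_pos rfl, if_neg hne, if_pos rfl]
    have := key hr hα hEα (x := c - w) (x' := c - w') (by linarith) (by linarith) hE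
    have e1 : (1:ℝ) / 2 - (w - c) / (2 * r * alphaFn ε)
        = 1 / 2 + (c - w) / (2 * r * alphaFn ε) := by ring
    have e2 : (1:ℝ) / 2 - (w' - c) / (2 * r * alphaFn ε)
        = 1 / 2 + (c - w') / (2 * r * alphaFn ε) := by ring
    rw [e1, e2]; exact this
  · replace hv : v = c + r * alphaFn ε := hv
    subst hv
    rw [probQ, probQ, if_pos rfl, if_pos rfl]
    exact key hr hα hEα (x := w - c) (x' := w' - c) (by linarith) (by linarith) hE
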